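/- Under the main constraint, if I and I' differ in slot j and agree in slot k, then (c_I c_{I'} − c_{I'_j} c_{I_j}) e^j_{i_jᶜ i_j} = (c_I c_{I'_{jk}} − c_{I'_j} c_{I_k}) e^k_{i_kᶜ i_k}. -/
import Mathlib


open scoped BigOperators

/-- Complement the bit in slot `j` of the multi-index `I`. -/
def bflip {n : ℕ} (I : Fin n → Fin 2) (j : Fin n) : Fin n → Fin 2 :=
  Function.update I j (1 - I j)

/-- The main constraint on coefficients c_I and environment vectors e^j_{ir}:
c_I e^j_{i_j i_j} + c_{I_j} e^j_{i_jᶜ i_j} = c_I e^k_{i_k i_k} + c_{I_k} e^k_{i_kᶜ i_k}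
for every multi-index I and all qubits j, k. -/
def MainConstraint {n : ℕ} {V : Type*} [AddCommGroup V] [Module ℂ V]
    (c : (Fin n → Fin 2) → ℂ) (e : Fin n → Fin 2 → Fin 2 → V) : Prop :=
  ∀ (I : Fin n → Fin 2) (j k : Fin n),
    c I • e j (I j) (I j) + c (bflip I j) • e j (1 - I j) (I j)
      = c I • e k (I k) (I k) + c (bflip I k) • e k (1 - I k) (I k)

/-- Under the main constraint, if I and I' differ in slot j and agree in slot k,
then (c_I c_{I'} − c_{I'_j} c_{I_j}) e^j_{i_jᶜ i_j}
   = (c_I c_{I'_{jk}} − c_{I'_j} c_{I_k}) e^k_{i_kᶜ i_k}. -/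
theorem stmt12 {n : ℕ} {V : Type*} [AddCommGroup V] [Module ℂ V]
    (c : (Fin n → Fin 2) → ℂ) (e : Fin n → Fin 2 → Fin 2 → V)
    (hmc : MainConstraint c e)
    (I I' : Fin n → Fin 2) (j k : Fin n)
    (hdiff : I' j ≠ I j) (hagree : I' k = I k) :
    (c I * c I' - c (bflip I' j) * c (bflip I j)) • e j (1 - I j) (I j)
      = (c I * c (bflip (bflip I' j) k) - c (bflip I' j) * c (bflip I k))
          • e k (1 - I k) (I k) := by

  have hflip : ∀ a b : Fin 2, a ≠ b → a = 1 - b := by decide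
  have hII : ∀ a : Fin 2, 1 - (1 - a) = a := by decide
  have hIj : I' j = 1 - I j := hflip _ _ hdiff
  have hjk : k ≠ j := by
    intro h; exact hdiff (h ▸ hagree)
  have h1 : (bflip I' j) j = I j := by
    simp [bflip, hIj, hII]
  have h2 : (bflip I' j) k = I k := by
    simp [bflip, Function.update_of_ne hjk, hagree]
  have h3 : bflip (bflip I' j) j = I' := by
    funext i
    by_cases h : i = j
    · subst h; simp [bflip, hII]
    · simp [bflip, Function.update_of_ne h]
  have hA := hmc I j k
  have hB := hmc (bflip I' j) j k
  rw [h1, h2, h3] at hB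
  linear_combination (norm := module) c I • hB - c (bflip I' j) • hA
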